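/- Let k ≥ 2 and r ≥ 2 be integers, let F_k be the free group on k generators, and for g ∈ F_k let |g| denote the length of the reduced word representing g. Then the set B_r \ {1} = {g ∈ F_k : 1 ≤ |g| ≤ r} is not a right tile of F_k: there is no set C ⊆ F_k such that the left translates c·(B_r \ {1}), c ∈ C, are pairwise disjoint and cover F_k. -/

import Mathlib

/-- Key combinatorial lemma: if `1 ≤ |w| ≤ r` with `r ≥ 2`, there is `h` with
`1 ≤ |h| ≤ r` and `1 ≤ |w*h| ≤ r`. -/
lemma stmt_17_key {α : Type*} [DecidableEq α] {r : ℕ} (hr : 2 ≤ r)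
    (w : FreeGroup α) (h1 : 1 ≤ w.norm) (h2 : w.norm ≤ r) :
    ∃ h : FreeGroup α, (1 ≤ h.norm ∧ h.norm ≤ r) ∧
      (1 ≤ (w * h).norm ∧ (w * h).norm ≤ r) := by
  have hw : FreeGroup.mk w.toWord = w := FreeGroup.mk_toWord
  have hlen : w.toWord.length = w.norm := rfl
  by_cases hd : w.norm = 1
  · -- `w` is a single letter; take `h = w`, so `w*h = w²` has norm 2.
    obtain ⟨p, hp⟩ : ∃ p, w.toWord = [p] := List.length_eq_one_iff.mp (hlen.trans hd)
    refine ⟨w, ⟨h1, h2⟩, ?_⟩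
    have hww : w * w = FreeGroup.mk [p, p] := by
      rw [← hw, hp, FreeGroup.mul_mk]; rfl
    have : (w * w).norm = 2 := by
      rw [hww]
      simp [FreeGroup.norm, FreeGroup.toWord_mk, FreeGroup.reduce]
    omega
  · -- `|w| ≥ 2`; cancel the last letter.
    have hd2 : 2 ≤ w.norm := by omega
    have hne : w.toWord ≠ [] := by
      intro h; rw [h] at hlen; simp at hlen; omega
    set p := w.toWord.getLast hne with hpdef
    have hsplit : w.toWord.dropLast ++ [p] = w.toWord := List.dropLast_append_getLast hne
    refine ⟨FreeGroup.mk [(p.1, !p.2)], ?_, ?_⟩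
    · constructor
      · have : FreeGroup.norm (FreeGroup.mk [(p.1, !p.2)]) = 1 := by
          simp [FreeGroup.norm, FreeGroup.toWord_mk, FreeGroup.reduce]
        omega
      · have : FreeGroup.norm (FreeGroup.mk [(p.1, !p.2)]) = 1 := by
          simp [FreeGroup.norm, FreeGroup.toWord_mk, FreeGroup.reduce]
        omega
    · have hcancel : FreeGroup.mk [p] * FreeGroup.mk [(p.1, !p.2)] = 1 := by
        have : (FreeGroup.mk [p])⁻¹ = FreeGroup.mk [(p.1, !p.2)] := by
          rw [FreeGroup.inv_mk]; simp [FreeGroup.invRev]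
        rw [← this, mul_inv_cancel]
      have heq : w * FreeGroup.mk [(p.1, !p.2)] = FreeGroup.mk w.toWord.dropLast := by
        calc w * FreeGroup.mk [(p.1, !p.2)]
            = FreeGroup.mk (w.toWord.dropLast ++ [p]) * FreeGroup.mk [(p.1, !p.2)] := by
              rw [hsplit, hw]
          _ = FreeGroup.mk w.toWord.dropLast * (FreeGroup.mk [p] * FreeGroup.mk [(p.1, !p.2)]) := by
              rw [← FreeGroup.mul_mk, mul_assoc]
          _ = FreeGroup.mk w.toWord.dropLast := by rw [hcancel, mul_one]
      constructor
      · by_contra hc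
        have h0 : (w * FreeGroup.mk [(p.1, !p.2)]).norm = 0 := by omega
        have h0' : w * FreeGroup.mk [(p.1, !p.2)] = 1 := FreeGroup.norm_eq_zero.mp h0
        have hwinv : w = (FreeGroup.mk [(p.1, !p.2)])⁻¹ := by
          rw [eq_inv_iff_mul_eq_one]; exact h0'
        have : w.norm = 1 := by
          rw [hwinv, FreeGroup.norm_inv_eq]
          simp [FreeGroup.norm, FreeGroup.toWord_mk, FreeGroup.reduce]
        omega
      · calc (w * FreeGroup.mk [(p.1, !p.2)]).norm
            = (FreeGroup.mk w.toWord.dropLast).norm := by rw [heq]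
          _ ≤ w.toWord.dropLast.length := FreeGroup.norm_mk_le
          _ ≤ w.toWord.length := List.length_dropLast.le.trans (Nat.sub_le _ _)
          _ ≤ r := by omega

/- STATEMENT 17: For `k ≥ 2` and `r ≥ 2`, the punctured ball
`B_r \ {1} = {g ∈ F_k : 1 ≤ |g| ≤ r}` (with `|g|` the reduced word length) is not a right
tile of the free group `F_k`: no family of left translates partitions `F_k`. -/
theorem stmt_17 (k r : ℕ) (hk : 2 ≤ k) (hr : 2 ≤ r) :
    ¬ ∃ C : Set (FreeGroup (Fin k)),
        (C.PairwiseDisjoint fun c => (fun s => c * s) ''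
          {h : FreeGroup (Fin k) | 1 ≤ FreeGroup.norm h ∧ FreeGroup.norm h ≤ r}) ∧
        ⋃ c ∈ C, (fun s => c * s) ''
          {h : FreeGroup (Fin k) | 1 ≤ FreeGroup.norm h ∧ FreeGroup.norm h ≤ r} =
          Set.univ := by
  rintro ⟨C, hdisj, hcover⟩
  set K : Set (FreeGroup (Fin k)) :=
    {h : FreeGroup (Fin k) | 1 ≤ FreeGroup.norm h ∧ FreeGroup.norm h ≤ r} with hK
  -- `1` is covered by some translate `c₀ • K`.
  have h1 : (1 : FreeGroup (Fin k)) ∈ ⋃ c ∈ C, (fun s => c * s) '' K := by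
    rw [hcover]; trivial
  obtain ⟨c₀, hc₀, hm₀⟩ := Set.mem_iUnion₂.mp h1
  obtain ⟨h₀, hh₀, hc₀h₀⟩ := hm₀
  -- `c₀` is covered by some translate `c₁ • K`.
  have h2 : c₀ ∈ ⋃ c ∈ C, (fun s => c * s) '' K := by
    rw [hcover]; trivial
  obtain ⟨c₁, hc₁, hm₁⟩ := Set.mem_iUnion₂.mp h2
  obtain ⟨w, hw, hc₁w₀⟩ := hm₁
  have hc₁w : c₁ * w = c₀ := hc₁w₀
  -- `c₁ ≠ c₀` since `w ≠ 1`.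
  have hwne : w ≠ 1 := by
    intro h; rw [h] at hw; simp [hK, FreeGroup.norm_one] at hw
  have hne : c₁ ≠ c₀ := by
    intro h; rw [h] at hc₁w
    exact hwne (by rwa [mul_eq_left] at hc₁w)
  -- find common element of the two translates
  obtain ⟨h, ⟨hh1, hh2⟩, hwh1, hwh2⟩ := stmt_17_key hr w hw.1 hw.2
  have hmem₀ : c₀ * h ∈ (fun s => c₀ * s) '' K := ⟨h, ⟨hh1, hh2⟩, rfl⟩
  have hmem₁ : c₀ * h ∈ (fun s => c₁ * s) '' K := by
    refine ⟨w * h, ⟨hwh1, hwh2⟩, ?_⟩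
    simp only [← mul_assoc, hc₁w]
  exact Set.disjoint_left.mp (hdisj hc₁ hc₀ hne) hmem₁ hmem₀
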